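/- For every d ≥ 1, every c ≥ 1 and every i ≥ 2 there exists a colouring C : {0,...,2_d(i^c)}^{d+1} → {0,...,i}^{32·d+c} such that C(x_1,...,x_{d+1}) ≠ C(x_2,...,x_{d+2}) for all x_1 < x_2 < ... < x_{d+2} ≤ 2_d(i^c). -/

import Mathlib

/-- Tower function: `tower 0 i = i`, `tower (n+1) i = 2 ^ tower n i`. -/
def tower : ℕ → ℕ → ℕ
  | 0, i => i
  | n+1, i => 2 ^ tower n i

/-- The iterated shift-graph colouring: `gcol 0 x = x 0`, and
`gcol (k+1) x` records the most significant differing bit of the two sub-colours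
together with their order. -/
def gcol : (k : ℕ) → (Fin (k+1) → ℕ) → ℕ
  | 0, x => x 0
  | k+1, x =>
      2 * Nat.log 2 ((gcol k fun j => x j.castSucc) ^^^ (gcol k fun j => x j.succ))
        + (if (gcol k fun j => x j.castSucc) < (gcol k fun j => x j.succ) then 1 else 0)

lemma testBit_log_self {n : ℕ} (hn : n ≠ 0) : n.testBit (Nat.log 2 n) = true := by
  have h1 : 2 ^ Nat.log 2 n ≤ n := Nat.pow_log_le_self 2 hn
  have h2 : n < 2 ^ (Nat.log 2 n + 1) := Nat.lt_pow_succ_log_self one_lt_two n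
  rw [Nat.testBit_eq_decide_div_mod_eq]
  have hge : 1 ≤ n / 2 ^ Nat.log 2 n := (Nat.one_le_div_iff (Nat.pow_pos (by norm_num))).mpr h1
  have hlt : n / 2 ^ Nat.log 2 n < 2 := by
    apply Nat.div_lt_of_lt_mul
    rw [pow_succ] at h2
    omega
  have : n / 2 ^ Nat.log 2 n = 1 := by omega
  simp [this]

/-- If `a < b` then at the most significant differing bit, `b` has a `1` and `a` has a `0`. -/
lemma msb_bits {a b : ℕ} (hab : a < b) :
    a.testBit (Nat.log 2 (a ^^^ b)) = false ∧ b.testBit (Nat.log 2 (a ^^^ b)) = true := by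
  set p := Nat.log 2 (a ^^^ b) with hp
  have hx : a ^^^ b ≠ 0 := by
    intro h
    exact absurd (by have := congrArg (a ^^^ ·) h; simpa [← Nat.xor_assoc] using this.symm : a = b) hab.ne
  have hbit : (a ^^^ b).testBit p = true := testBit_log_self hx
  have hhi : ∀ j, p < j → a.testBit j = b.testBit j := by
    intro j hj
    have hf : (a ^^^ b).testBit j = false := by
      apply Nat.testBit_lt_two_pow
      calc a ^^^ b < 2 ^ (p + 1) := Nat.lt_pow_succ_log_self one_lt_two _
        _ ≤ 2 ^ j := Nat.pow_le_pow_right (by norm_num) hj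
    rw [Nat.testBit_xor] at hf
    revert hf
    cases a.testBit j <;> cases b.testBit j <;> simp
  rw [Nat.testBit_xor] at hbit
  cases hA : a.testBit p <;> cases hB : b.testBit p <;> rw [hA, hB] at hbit <;>
      simp at hbit
  · exact ⟨rfl, rfl⟩
  · exfalso
    have : b < a := Nat.lt_of_testBit p hB hA (fun j hj => (hhi j hj).symm)
    omega

/-- Properness: the colouring differs on adjacent increasing tuples. -/
lemma gcol_neq : ∀ (k : ℕ) (x : Fin (k+2) → ℕ), StrictMono x →
    gcol k (fun j => x j.castSucc) ≠ gcol k (fun j => x j.succ) := by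
  intro k
  induction k with
  | zero =>
    intro x hx
    have : x ((0:Fin 1).castSucc) < x ((0:Fin 1).succ) := hx (by simp [Fin.lt_def])
    simpa [gcol] using this.ne
  | succ k ih =>
    intro x hx heq
    simp only [gcol] at heq
    rw [show (fun (j : Fin (k+1)) => x j.succ.castSucc) = (fun j => x j.castSucc.succ) by
      funext j; rw [Fin.succ_castSucc]] at heq
    set a := gcol k (fun j => x j.castSucc.castSucc) with ha
    set b := gcol k (fun j => x j.castSucc.succ) with hb
    set c := gcol k (fun j => x j.succ.succ) with hc
    have hab : a ≠ b := ih (fun j => x j.castSucc)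
      (fun _ _ h => hx (Fin.castSucc_lt_castSucc_iff.mpr h))
    have hbc : b ≠ c := ih (fun j => x j.succ)
      (fun _ _ h => hx (Fin.succ_lt_succ_iff.mpr h))
    by_cases h1 : a < b <;> by_cases h2 : b < c
    · rw [if_pos h1, if_pos h2] at heq
      have hpq : Nat.log 2 (a ^^^ b) = Nat.log 2 (b ^^^ c) := by omega
      have e1 := (msb_bits h1).2
      have e2 := (msb_bits h2).1
      rw [hpq] at e1
      rw [e1] at e2
      simp at e2
    · rw [if_pos h1, if_neg h2] at heq; omega
    · rw [if_neg h1, if_pos h2] at heq; omega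
    · rw [if_neg h1, if_neg h2] at heq
      have h1' : b < a := by omega
      have h2' : c < b := by omega
      have hpq : Nat.log 2 (a ^^^ b) = Nat.log 2 (b ^^^ c) := by omega
      have e1 := (msb_bits h1').1
      have e2 := (msb_bits h2').2
      rw [Nat.xor_comm b a] at e1
      rw [Nat.xor_comm c b] at e2
      rw [hpq] at e1
      rw [e1] at e2
      simp at e2

/-- Size bound for the colouring. -/
lemma tower_pow : ∀ (k M : ℕ), tower k (2^M) = tower (k+1) M := by
  intro k M
  induction k with
  | zero => rfl
  | succ k ih => show 2 ^ tower k (2^M) = _; rw [ih]; rfl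

lemma gcol_le : ∀ (k M : ℕ), 2 ≤ M → ∀ x : Fin (k+1) → ℕ,
    (∀ j, x j ≤ tower k M) → gcol k x ≤ 2 * M + 3 := by
  intro k
  induction k with
  | zero =>
    intro M hM x hx
    have := hx 0
    simp only [tower] at this
    simp only [gcol]
    omega
  | succ k ih =>
    intro M hM x hx
    have hM' : 2 ≤ 2 ^ M := by
      calc 2 = 2^1 := rfl
      _ ≤ 2 ^ M := Nat.pow_le_pow_right (by norm_num) (by omega)
    have htot : ∀ j : Fin (k+2), x j ≤ tower k (2^M) := by
      rw [tower_pow]; exact hx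
    have hA : gcol k (fun j => x j.castSucc) ≤ 2 * 2^M + 3 :=
      ih (2^M) hM' _ (fun j => htot _)
    have hB : gcol k (fun j => x j.succ) ≤ 2 * 2^M + 3 :=
      ih (2^M) hM' _ (fun j => htot _)
    simp only [gcol]
    set A := gcol k (fun j => x j.castSucc)
    set B := gcol k (fun j => x j.succ)
    have hxor : A ^^^ B < 2 ^ (M + 2) := by
      apply Nat.xor_lt_two_pow
      · calc A ≤ 2 * 2^M + 3 := hA
          _ < 2^(M+2) := by rw [pow_succ, pow_succ]; omega
      · calc B ≤ 2 * 2^M + 3 := hB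
          _ < 2^(M+2) := by rw [pow_succ, pow_succ]; omega
    have hlog : Nat.log 2 (A ^^^ B) ≤ M + 1 := by
      rcases eq_or_ne (A ^^^ B) 0 with h | h
      · simp [h]
      · have := Nat.log_lt_of_lt_pow h hxor
        omega
    split <;> omega

/-- Base-`b` digits below `b^n` determine a number. -/
lemma digits_determine (b : ℕ) (hb : 2 ≤ b) : ∀ (n u v : ℕ), u < b^n → v < b^n →
    (∀ j < n, u / b^j % b = v / b^j % b) → u = v := by
  intro n
  induction n with
  | zero => intro u v hu hv _; simp at hu hv; omega
  | succ n ih =>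
    intro u v hu hv h
    have h0 : u % b = v % b := by simpa using h 0 (by omega)
    have hrec : u / b = v / b := by
      apply ih (u / b) (v / b)
      · rw [Nat.div_lt_iff_lt_mul (by omega)]; rw [pow_succ] at hu; omega
      · rw [Nat.div_lt_iff_lt_mul (by omega)]; rw [pow_succ] at hv; omega
      · intro j hj
        have hj1 := h (j+1) (by omega)
        rw [Nat.div_div_eq_div_mul, Nat.div_div_eq_div_mul]
        rw [pow_succ, Nat.mul_comm (b^j) b] at hj1
        exact hj1
    have hu' := Nat.div_add_mod u b
    rw [hrec] at hu'
    have hv' := Nat.div_add_mod v b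
    have hub := Nat.mod_lt u (show 0 < b by omega)
    have hvb := Nat.mod_lt v (show 0 < b by omega)
    omega

/-- Lower bound colouring for adjacent Ramsey with constant parameter:
a colouring `C : {0,…,2_d(i^c)}^{d+1} → {0,…,i}^{32·d+c}` whose values on adjacent
increasing tuples are never equal. -/
theorem AR_lower_colouring_neq (d c i : ℕ) (hd : 1 ≤ d) (hc : 1 ≤ c) (hi : 2 ≤ i) :
    ∃ C : (Fin (d+1) → ℕ) → (Fin (32*d + c) → ℕ),
      (∀ x : Fin (d+1) → ℕ, (∀ k, x k ≤ tower d (i^c)) → ∀ j, C x j ≤ i) ∧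
      (∀ x : Fin (d+2) → ℕ, StrictMono x → x (Fin.last (d+1)) ≤ tower d (i^c) →
        C (fun k => x k.castSucc) ≠ C (fun k => x k.succ)) := by
  refine ⟨fun x j => gcol d x / (i+1) ^ (j : ℕ) % (i+1), ?_, ?_⟩
  · intro x _ j
    have h := Nat.mod_lt (gcol d x / (i+1)^(j:ℕ)) (show 0 < i+1 by omega)
    show gcol d x / (i+1)^(j:ℕ) % (i+1) ≤ i
    omega
  · intro x hx hlast hC
    have hM : 2 ≤ i ^ c := by
      calc 2 = 2^1 := rfl
      _ ≤ i ^ 1 := Nat.pow_le_pow_left hi 1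
      _ ≤ i ^ c := Nat.pow_le_pow_right (by omega) hc
    have hbound : ∀ k : Fin (d+2), x k ≤ tower d (i^c) := fun k =>
      le_trans (hx.monotone (Fin.le_last k)) hlast
    have hu : gcol d (fun k => x k.castSucc) ≤ 2 * i^c + 3 :=
      gcol_le d (i^c) hM _ (fun j => hbound _)
    have hv : gcol d (fun k => x k.succ) ≤ 2 * i^c + 3 :=
      gcol_le d (i^c) hM _ (fun j => hbound _)
    have hne : gcol d (fun k => x k.castSucc) ≠ gcol d (fun k => x k.succ) :=
      gcol_neq d x hx
    have hbig : 2 * i^c + 3 < (i+1) ^ (32*d + c) := by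
      have h1 : (6:ℕ) * i^c ≤ 3^32 * i^c := by
        have : (6:ℕ) ≤ 3^32 := by norm_num
        exact Nat.mul_le_mul_right _ this
      have h2 : (3:ℕ)^32 * i^c ≤ (i+1)^(32*d) * (i+1)^c := by
        apply Nat.mul_le_mul
        · calc (3:ℕ)^32 ≤ (i+1)^32 := Nat.pow_le_pow_left (by omega) 32
            _ ≤ (i+1)^(32*d) := Nat.pow_le_pow_right (by omega) (by omega)
        · exact Nat.pow_le_pow_left (by omega) c
      have h3 : (i+1)^(32*d) * (i+1)^c = (i+1)^(32*d + c) := (pow_add _ _ _).symm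
      have hic : 1 ≤ i^c := by omega
      omega
    apply hne
    apply digits_determine (i+1) (by omega) (32*d + c)
    · omega
    · omega
    · intro j hj
      have := congrFun hC ⟨j, hj⟩
      simpa using this
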